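/- Fix (a₀,a₁) ∈ ℂ²∖{0}, let L be the ruling line of points of P¹×P¹ with first coordinate [a₀:a₁], and let q be a point of P¹×P¹ not lying on L. Then the set of forms f ∈ V that are singular at every point of L and also singular at q is a complex linear subspace of V of dimension 5 (codimension 11). -/

import Mathlib

open MvPolynomial

noncomputable section

/-- The polynomial ring `ℂ[x₀, x₁, y₀, y₁]`, with variables indexed by `Fin 4`:
`x₀ = X 0`, `x₁ = X 1`, `y₀ = X 2`, `y₁ = X 3`. -/
abbrev P4 : Type := MvPolynomial (Fin 4) ℂ

/-- Weights picking out the degree in the variables `x₀, x₁`. -/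
def wx : Fin 4 → ℕ := ![1, 1, 0, 0]

/-- Weights picking out the degree in the variables `y₀, y₁`. -/
def wy : Fin 4 → ℕ := ![0, 0, 1, 1]

/-- The 16-dimensional space `V` of bihomogeneous forms of bidegree `(3,3)`. -/
def V33 : Submodule ℂ P4 :=
  weightedHomogeneousSubmodule ℂ wx 3 ⊓ weightedHomogeneousSubmodule ℂ wy 3

/-- A form `f` is singular at the point with representative `p ∈ ℂ⁴` if all four partial
derivatives of `f` vanish at `p`. -/
def SingularAt (f : P4) (p : Fin 4 → ℂ) : Prop :=
  ∀ i : Fin 4, eval p (pderiv i f) = 0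

/-- `p : ℂ⁴` is a valid representative of a point of `P¹ × P¹`. -/
def IsRep (p : Fin 4 → ℂ) : Prop :=
  ¬(p 0 = 0 ∧ p 1 = 0) ∧ ¬(p 2 = 0 ∧ p 3 = 0)

/-- Two representatives define the same point of `P¹ × P¹` iff their `(a₀,a₁)`-parts are
proportional and their `(b₀,b₁)`-parts are proportional. -/
def SamePoint (p q : Fin 4 → ℂ) : Prop :=
  (∃ l : ℂˣ, q 0 = l * p 0 ∧ q 1 = l * p 1) ∧ (∃ m : ℂˣ, q 2 = m * p 2 ∧ q 3 = m * p 3)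

set_option maxHeartbeats 4000000

/-! ### Auxiliary definitions -/

def B (i j k l : ℕ) : P4 := X 0 ^ i * X 1 ^ j * X 2 ^ k * X 3 ^ l

def E (v : Fin 4 → ℕ) : Fin 4 →₀ ℕ := Finsupp.equivFunOnFinite.symm v

lemma E_apply (v : Fin 4 → ℕ) (i : Fin 4) : E v i = v i := rfl

lemma E_inj {v w : Fin 4 → ℕ} : E v = E w ↔ v = w :=
  Finsupp.equivFunOnFinite.symm.injective.eq_iff

lemma B_eq_monomial (i j k l : ℕ) : B i j k l = monomial (E ![i,j,k,l]) 1 := by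
  have : E ![i,j,k,l] = Finsupp.single (0:Fin 4) i + Finsupp.single 1 j +
      Finsupp.single 2 k + Finsupp.single 3 l := by
    ext a; fin_cases a <;> simp [E, Finsupp.single_apply]
  rw [this]; simp [B, X_pow_eq_monomial, monomial_mul]

lemma coeff_B (dd : Fin 4 →₀ ℕ) (i j k l : ℕ) :
    coeff dd (B i j k l) = if E ![i,j,k,l] = dd then 1 else 0 := by
  rw [B_eq_monomial, coeff_monomial]

lemma weight_wx (dd : Fin 4 →₀ ℕ) : Finsupp.weight wx dd = dd 0 + dd 1 := by
  rw [Finsupp.weight_apply, Finsupp.sum_fintype _ _ (fun i => zero_smul ℕ (wx i))]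
  simp [Fin.sum_univ_four, wx]

lemma weight_wy (dd : Fin 4 →₀ ℕ) : Finsupp.weight wy dd = dd 2 + dd 3 := by
  rw [Finsupp.weight_apply, Finsupp.sum_fintype _ _ (fun i => zero_smul ℕ (wy i))]
  simp [Fin.sum_univ_four, wy]

lemma coeff_B33_eq_zero (dd : Fin 4 →₀ ℕ) (hdd : ¬(dd 0 + dd 1 = 3 ∧ dd 2 + dd 3 = 3))
    (i j k l : ℕ) (hij : i + j = 3) (hkl : k + l = 3) : coeff dd (B i j k l) = 0 := by
  rw [coeff_B, if_neg]
  intro h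
  exact hdd ⟨by rw [← h]; simpa [E_apply] using hij, by rw [← h]; simpa [E_apply] using hkl⟩

lemma B_mem_V33 (i j k l : ℕ) (hij : i + j = 3) (hkl : k + l = 3) : B i j k l ∈ V33 := by
  rw [B_eq_monomial]
  constructor <;>
  · apply isWeightedHomogeneous_monomial
    simp [weight_wx, weight_wy, E_apply]
    omega

/-! ### Expansion of a bihomogeneous form of bidegree (3,3) -/

lemma expansion (g : P4) (hx : g.IsWeightedHomogeneous wx 3) (hy : g.IsWeightedHomogeneous wy 3) :
    g = (coeff (E ![3,0,3,0]) g) • B 3 0 3 0 + (coeff (E ![3,0,2,1]) g) • B 3 0 2 1 +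
        (coeff (E ![3,0,1,2]) g) • B 3 0 1 2 + (coeff (E ![3,0,0,3]) g) • B 3 0 0 3 +
        (coeff (E ![2,1,3,0]) g) • B 2 1 3 0 + (coeff (E ![2,1,2,1]) g) • B 2 1 2 1 +
        (coeff (E ![2,1,1,2]) g) • B 2 1 1 2 + (coeff (E ![2,1,0,3]) g) • B 2 1 0 3 +
        (coeff (E ![1,2,3,0]) g) • B 1 2 3 0 + (coeff (E ![1,2,2,1]) g) • B 1 2 2 1 +
        (coeff (E ![1,2,1,2]) g) • B 1 2 1 2 + (coeff (E ![1,2,0,3]) g) • B 1 2 0 3 +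
        (coeff (E ![0,3,3,0]) g) • B 0 3 3 0 + (coeff (E ![0,3,2,1]) g) • B 0 3 2 1 +
        (coeff (E ![0,3,1,2]) g) • B 0 3 1 2 + (coeff (E ![0,3,0,3]) g) • B 0 3 0 3 := by
  ext dd
  by_cases h3 : dd 0 + dd 1 = 3 ∧ dd 2 + dd 3 = 3
  · obtain ⟨n0, n2, hE, hn0, hn2⟩ :
        ∃ n0 n2, dd = E ![n0, 3 - n0, n2, 3 - n2] ∧ n0 ≤ 3 ∧ n2 ≤ 3 := by
      refine ⟨dd 0, dd 2, ?_, by omega, by omega⟩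
      ext a
      fin_cases a <;> simp [E_apply] <;> omega
    clear h3
    subst hE
    interval_cases n0 <;> interval_cases n2 <;>
      norm_num [coeff_B, E_inj, smul_eq_mul] <;>
      norm_num [funext_iff, Fin.forall_fin_succ]
  · rw [show coeff dd g = 0 from by
      by_contra hne
      exact h3 ⟨by rw [← weight_wx]; exact hx hne, by rw [← weight_wy]; exact hy hne⟩]
    simp [coeff_smul, coeff_B33_eq_zero dd h3]

/-! ### The normal form situation -/

def Nset (d ee u : ℂ) : Set P4 :=
  {g : P4 | g ∈ V33 ∧
    (∀ b₀ b₁ : ℂ, ¬(b₀ = 0 ∧ b₁ = 0) → SingularAt g ![d, 0, b₀, b₁]) ∧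
    SingularAt g ![0, ee, u, 0]}

def M5 : Set P4 := {B 1 2 2 1, B 1 2 1 2, B 1 2 0 3, B 0 3 1 2, B 0 3 0 3}

lemma normal_subset (d ee u : ℂ) (hd : d ≠ 0) (he : ee ≠ 0) (hu : u ≠ 0) :
    Nset d ee u ⊆ ↑(Submodule.span ℂ M5) := by
  rintro g ⟨⟨hx, hy⟩, hline, hpt⟩
  rw [SetLike.mem_coe, mem_weightedHomogeneousSubmodule] at hx hy
  have hg := expansion g hx hy
  set c00 := coeff (E ![3,0,3,0]) g
  set c01 := coeff (E ![3,0,2,1]) g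
  set c02 := coeff (E ![3,0,1,2]) g
  set c03 := coeff (E ![3,0,0,3]) g
  set c10 := coeff (E ![2,1,3,0]) g
  set c11 := coeff (E ![2,1,2,1]) g
  set c12 := coeff (E ![2,1,1,2]) g
  set c13 := coeff (E ![2,1,0,3]) g
  set c20 := coeff (E ![1,2,3,0]) g
  set c21 := coeff (E ![1,2,2,1]) g
  set c22 := coeff (E ![1,2,1,2]) g
  set c23 := coeff (E ![1,2,0,3]) g
  set c30 := coeff (E ![0,3,3,0]) g
  set c31 := coeff (E ![0,3,2,1]) g
  set c32 := coeff (E ![0,3,1,2]) g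
  set c33 := coeff (E ![0,3,0,3]) g
  have A1 := (hline 1 0 (by norm_num)) 0
  have A2 := (hline 0 1 (by norm_num)) 0
  have A3 := (hline 1 0 (by norm_num)) 3
  have A4 := (hline 0 1 (by norm_num)) 2
  have A5 := (hline 1 0 (by norm_num)) 1
  have A6 := (hline 0 1 (by norm_num)) 1
  have A7 := (hline 1 1 (by norm_num)) 1
  have A8 := (hline 1 (-1) (by norm_num)) 1
  have P1 := hpt 0
  have P2 := hpt 1
  have P3 := hpt 3
  rw [hg] at A1 A2 A3 A4 A5 A6 A7 A8 P1 P2 P3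
  simp only [B, map_add, smul_eq_C_mul, map_mul, pderiv_mul, pderiv_pow, pderiv_X_self,
    pderiv_X_of_ne, pderiv_C] at A1 A2 A3 A4 A5 A6 A7 A8 P1 P2 P3
  simp [Matrix.cons_val_zero, Matrix.cons_val_one] at A1 A2 A3 A4 A5 A6 A7 A8 P1 P2 P3
  have h00 : c00 = 0 := A1.resolve_right hd
  have h03 : c03 = 0 := A2.resolve_right hd
  have h01 : c01 = 0 := A3.resolve_right hd
  have h02 : c02 = 0 := A4.resolve_right hd
  have h10 : c10 = 0 := A5.resolve_right hd
  have h13 : c13 = 0 := A6.resolve_right hd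
  have heu : ¬(ee = 0 ∨ u = 0) := by rintro (h | h); exacts [he h, hu h]
  have h20 : c20 = 0 := P1.resolve_right heu
  have h30 : c30 = 0 := P2.resolve_right heu
  have h31 : c31 = 0 := P3.resolve_right heu
  have hd2 : d ^ 2 ≠ 0 := pow_ne_zero _ hd
  have h11 : c11 = 0 := by
    have h : d ^ 2 * c11 = 0 := by
      linear_combination (1/2 : ℂ) * A7 - (1/2 : ℂ) * A8 - d ^ 2 * h13
    exact (mul_eq_zero.mp h).resolve_left hd2
  have h12 : c12 = 0 := by
    have h : d ^ 2 * c12 = 0 := by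
      linear_combination (1/2 : ℂ) * A7 + (1/2 : ℂ) * A8 - d ^ 2 * h10
    exact (mul_eq_zero.mp h).resolve_left hd2
  rw [SetLike.mem_coe, hg, h00, h01, h02, h03, h10, h11, h12, h13, h20, h30, h31]
  simp only [zero_smul, zero_add, add_zero]
  refine Submodule.add_mem _ (Submodule.add_mem _ (Submodule.add_mem _ (Submodule.add_mem _
    (Submodule.smul_mem _ _ (Submodule.subset_span ?_))
    (Submodule.smul_mem _ _ (Submodule.subset_span ?_)))
    (Submodule.smul_mem _ _ (Submodule.subset_span ?_)))
    (Submodule.smul_mem _ _ (Submodule.subset_span ?_)))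
    (Submodule.smul_mem _ _ (Submodule.subset_span ?_)) <;> simp [M5]

def NSub (d ee u : ℂ) : Submodule ℂ P4 where
  carrier := Nset d ee u
  zero_mem' := ⟨Submodule.zero_mem _, fun _ _ _ i => by simp, fun i => by simp⟩
  add_mem' := fun {a b} ha hb =>
    ⟨Submodule.add_mem _ ha.1 hb.1,
     fun b0 b1 hb' i => by simp [map_add, ha.2.1 b0 b1 hb' i, hb.2.1 b0 b1 hb' i],
     fun i => by simp [map_add, ha.2.2 i, hb.2.2 i]⟩
  smul_mem' := fun r {x} hx =>
    ⟨Submodule.smul_mem _ r hx.1,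
     fun b0 b1 hb' i => by
       simp [smul_eq_C_mul, pderiv_C_mul, hx.2.1 b0 b1 hb' i],
     fun i => by simp [smul_eq_C_mul, pderiv_C_mul, hx.2.2 i]⟩

lemma gen_mem_Nset (d ee u : ℂ) : M5 ⊆ Nset d ee u := by
  intro μ hμ
  simp only [M5, Set.mem_insert_iff, Set.mem_singleton_iff] at hμ
  rcases hμ with rfl | rfl | rfl | rfl | rfl <;>
    exact ⟨B_mem_V33 _ _ _ _ (by norm_num) (by norm_num),
      fun b0 b1 _ i => by
        fin_cases i <;>
          (simp [B, pderiv_mul, pderiv_pow, pderiv_X_self, pderiv_X_of_ne]; try ring),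
      fun i => by
        fin_cases i <;>
          (simp [B, pderiv_mul, pderiv_pow, pderiv_X_self, pderiv_X_of_ne]; try ring)⟩

lemma normal_span (d ee u : ℂ) (hd : d ≠ 0) (he : ee ≠ 0) (hu : u ≠ 0) :
    Nset d ee u = ↑(Submodule.span ℂ M5) := by
  apply Set.Subset.antisymm (normal_subset d ee u hd he hu)
  intro f hf
  have hle : Submodule.span ℂ M5 ≤ NSub d ee u :=
    Submodule.span_le.mpr (gen_mem_Nset d ee u)
  exact hle hf

lemma finrank_M5 : Module.finrank ℂ (Submodule.span ℂ M5) = 5 := by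
  set v : Fin 5 → P4 := ![B 1 2 2 1, B 1 2 1 2, B 1 2 0 3, B 0 3 1 2, B 0 3 0 3] with hv
  set ι : Fin 5 → (Fin 4 →₀ ℕ) :=
    ![E ![1,2,2,1], E ![1,2,1,2], E ![1,2,0,3], E ![0,3,1,2], E ![0,3,0,3]] with hι
  have hvι : v = (fun s => (monomial s (1:ℂ))) ∘ ι := by
    funext i
    fin_cases i <;> simp [hv, hι, B_eq_monomial]
  have hinj : Function.Injective ι := by
    have hV : ι = E ∘ ![![1,2,2,1], ![1,2,1,2], ![1,2,0,3], ![0,3,1,2], ![0,3,0,3]] := by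
      funext i; fin_cases i <;> rfl
    rw [hV]
    exact Finsupp.equivFunOnFinite.symm.injective.comp (by decide)
  have hli : LinearIndependent ℂ v := by
    rw [hvι, ← coe_basisMonomials]
    exact (basisMonomials (Fin 4) ℂ).linearIndependent.comp ι hinj
  have hrange : Set.range v = M5 := by
    ext x
    constructor
    · rintro ⟨i, rfl⟩
      fin_cases i <;> simp [hv, M5]
    · rintro (rfl | rfl | rfl | rfl | rfl)
      exacts [⟨0, rfl⟩, ⟨1, rfl⟩, ⟨2, rfl⟩, ⟨3, rfl⟩, ⟨4, rfl⟩]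
  rw [← hrange, finrank_span_eq_card hli, Fintype.card_fin]

/-! ### Linear substitutions -/

lemma pderiv_aeval (L : Fin 4 → P4) (f : P4) (i : Fin 4) :
    pderiv i (aeval L f) = ∑ j : Fin 4, aeval L (pderiv j f) * pderiv i (L j) := by
  induction f using MvPolynomial.induction_on with
  | C a => simp
  | add p q hp hq =>
      simp only [map_add, hp, hq, ← Finset.sum_add_distrib, add_mul]
  | mul_X p j hp =>
      rw [map_mul, aeval_X, pderiv_mul, hp]
      fin_cases j <;>
        simp [Fin.sum_univ_four, pderiv_mul, pderiv_X_self, pderiv_X_of_ne, map_add,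
          map_mul, aeval_X] <;> ring

lemma eval_aeval (L : Fin 4 → P4) (p : Fin 4 → ℂ) (f : P4) :
    eval p (aeval L f) = eval (fun j => eval p (L j)) f := by
  rw [aeval_def, algebraMap_eq, ← eval_assoc]
  rfl

lemma aeval_aeval_id (L L' : Fin 4 → P4) (hid : ∀ j, aeval L (L' j) = X j) (f : P4) :
    aeval L (aeval L' f) = f := by
  have h : (aeval L).comp (aeval L') = AlgHom.id ℂ P4 := by
    apply algHom_ext
    intro i
    simp only [AlgHom.comp_apply, aeval_X, AlgHom.id_apply]
    exact hid i
  have := congrArg (fun φ => φ f) h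
  simpa using this

lemma singular_aeval (r00 r01 r10 r11 s00 s01 s10 s11 : ℂ)
    (hr : r00*r11 - r01*r10 ≠ 0) (hs : s00*s11 - s01*s10 ≠ 0) (g : P4) (p : Fin 4 → ℂ) :
    SingularAt (aeval ![C r00 * X 0 + C r01 * X 1, C r10 * X 0 + C r11 * X 1,
                       C s00 * X 2 + C s01 * X 3, C s10 * X 2 + C s11 * X 3] g) p ↔
    SingularAt g ![r00 * p 0 + r01 * p 1, r10 * p 0 + r11 * p 1,
                   s00 * p 2 + s01 * p 3, s10 * p 2 + s11 * p 3] := by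
  set L : Fin 4 → P4 := ![C r00 * X 0 + C r01 * X 1, C r10 * X 0 + C r11 * X 1,
                       C s00 * X 2 + C s01 * X 3, C s10 * X 2 + C s11 * X 3] with hL
  set Tp : Fin 4 → ℂ := ![r00 * p 0 + r01 * p 1, r10 * p 0 + r11 * p 1,
                   s00 * p 2 + s01 * p 3, s10 * p 2 + s11 * p 3] with hTp
  have hTp' : (fun j => eval p (L j)) = Tp := by
    funext j
    fin_cases j <;> simp [hL, hTp]
  have key : ∀ i, eval p (pderiv i (aeval L g)) =
      ∑ j : Fin 4, eval Tp (pderiv j g) * eval p (pderiv i (L j)) := by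
    intro i
    rw [pderiv_aeval, map_sum]
    congr 1
    funext j
    rw [map_mul, eval_aeval, hTp']
  constructor
  · intro h i
    have h0 := h 0; have h1 := h 1; have h2 := h 2; have h3 := h 3
    rw [key] at h0 h1 h2 h3
    simp [Fin.sum_univ_four, hL, pderiv_mul, pderiv_C, pderiv_X_self, pderiv_X_of_ne]
      at h0 h1 h2 h3
    fin_cases i
    · show eval Tp (pderiv (0:Fin 4) g) = 0
      exact (mul_eq_zero.mp (by linear_combination r11 * h0 - r10 * h1)).resolve_left hr
    · show eval Tp (pderiv (1:Fin 4) g) = 0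
      exact (mul_eq_zero.mp (by linear_combination (- r01) * h0 + r00 * h1)).resolve_left hr
    · show eval Tp (pderiv (2:Fin 4) g) = 0
      exact (mul_eq_zero.mp (by linear_combination s11 * h2 - s10 * h3)).resolve_left hs
    · show eval Tp (pderiv (3:Fin 4) g) = 0
      exact (mul_eq_zero.mp (by linear_combination (- s01) * h2 + s00 * h3)).resolve_left hs
  · intro h i
    rw [key]
    simp [Fin.sum_univ_four, h 0, h 1, h 2, h 3]

lemma SingularAt.of_eq {f : P4} {p p' : Fin 4 → ℂ} (h : SingularAt f p)
    (he : ∀ i, p i = p' i) : SingularAt f p' := by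
  rwa [← funext he]

lemma IsWH_pow {w : Fin 4 → ℕ} {φ : P4} {m : ℕ} (h : φ.IsWeightedHomogeneous w m) (k : ℕ) :
    (φ ^ k).IsWeightedHomogeneous w (k * m) := by
  induction k with
  | zero => simpa using isWeightedHomogeneous_one ℂ w
  | succ n ih =>
      rw [pow_succ, Nat.succ_mul]
      exact ih.mul h

lemma aeval_isWeightedHomogeneous (w : Fin 4 → ℕ) (L : Fin 4 → P4)
    (hL : ∀ j, (L j).IsWeightedHomogeneous w (w j)) {f : P4} {n : ℕ}
    (hf : f.IsWeightedHomogeneous w n) : ((aeval L f : P4)).IsWeightedHomogeneous w n := by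
  classical
  rw [show (aeval L f : P4) = ∑ dd ∈ f.support, aeval L (monomial dd (coeff dd f)) by
    rw [← map_sum, ← as_sum]]
  apply IsWeightedHomogeneous.sum
  intro dd hdd
  rw [aeval_monomial]
  have hw : Finsupp.weight w dd = n := hf (mem_support_iff.mp hdd)
  have hC : ((algebraMap ℂ P4) (coeff dd f)).IsWeightedHomogeneous w 0 := by
    rw [algebraMap_eq]; exact isWeightedHomogeneous_C w _
  have hprod : (dd.prod fun j e => L j ^ e : P4).IsWeightedHomogeneous w
      (∑ j ∈ dd.support, dd j * w j) := by
    rw [Finsupp.prod]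
    exact IsWeightedHomogeneous.prod dd.support _ _ (fun j _ => IsWH_pow (hL j) (dd j))
  have hsum : ∑ j ∈ dd.support, dd j * w j = n := by
    rw [← hw, Finsupp.weight_apply, Finsupp.sum]
    rfl
  rw [hsum] at hprod
  simpa using hC.mul hprod

lemma lin_WH (w : Fin 4 → ℕ) (u v : ℂ) (i j : Fin 4) (m : ℕ) (hi : w i = m) (hj : w j = m) :
    IsWeightedHomogeneous w (C u * X i + C v * X j : P4) m := by
  apply IsWeightedHomogeneous.add
  · have h := (isWeightedHomogeneous_C w u (R := ℂ)).mul (isWeightedHomogeneous_X ℂ w i)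
    rwa [zero_add, hi] at h
  · have h := (isWeightedHomogeneous_C w v (R := ℂ)).mul (isWeightedHomogeneous_X ℂ w j)
    rwa [zero_add, hj] at h

lemma lin_comb (i j : Fin 4) (u v w z w' z' : ℂ) (h1 : u*w + v*w' = 1)
    (h2 : u*z + v*z' = 0) :
    C u * (C w * X i + C z * X j) + C v * (C w' * X i + C z' * X j) = (X i : P4) := by
  rw [show C u * (C w * X i + C z * X j) + C v * (C w' * X i + C z' * X j)
      = C (u*w + v*w') * X i + C (u*z + v*z') * X j from by
    simp only [map_add, map_mul]; ring]
  rw [h1, h2]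
  simp

lemma lin_comb' (i j : Fin 4) (u v w z w' z' : ℂ) (h1 : u*w + v*w' = 0)
    (h2 : u*z + v*z' = 1) :
    C u * (C w * X i + C z * X j) + C v * (C w' * X i + C z' * X j) = (X j : P4) := by
  rw [show C u * (C w * X i + C z * X j) + C v * (C w' * X i + C z' * X j)
      = C (u*w + v*w') * X i + C (u*z + v*z') * X j from by
    simp only [map_add, map_mul]; ring]
  rw [h1, h2]
  simp

/-! ### The main theorem -/

/-- Fix `(a₀,a₁) ∈ ℂ² ∖ {0}`, let `L` be the ruling line of points of `P¹ × P¹` with first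
coordinate `[a₀ : a₁]`, and let `q` be a point of `P¹ × P¹` not lying on `L`. The set of forms
`f ∈ V` singular at every point of `L` and also singular at `q` is a complex linear subspace
of `V` of dimension `5` (codimension 11). -/
theorem singular_along_line_and_at_point_codim_eleven
    (a₀ a₁ : ℂ) (ha : ¬(a₀ = 0 ∧ a₁ = 0))
    (q : Fin 4 → ℂ) (hq : IsRep q)
    (hqL : ¬ ∃ l : ℂˣ, q 0 = l * a₀ ∧ q 1 = l * a₁) :
    ∃ S : Submodule ℂ P4,
      (S : Set P4) = {f : P4 | f ∈ V33 ∧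
        (∀ b₀ b₁ : ℂ, ¬(b₀ = 0 ∧ b₁ = 0) → SingularAt f ![a₀, a₁, b₀, b₁]) ∧
        SingularAt f q} ∧
      Module.finrank ℂ S = 5 := by
  obtain ⟨hq01, hq23⟩ := hq
  -- the x-side determinant
  have hd : q 1 * a₀ - q 0 * a₁ ≠ 0 := by
    intro h
    apply hqL
    by_cases h0 : a₀ = 0
    · have ha1 : a₁ ≠ 0 := fun h1 => ha ⟨h0, h1⟩
      have hq0 : q 0 = 0 := by
        have h2 : q 0 * a₁ = 0 := by linear_combination -h + q 1 * h0
        exact (mul_eq_zero.mp h2).resolve_right ha1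
      have hq1 : q 1 ≠ 0 := fun h1 => hq01 ⟨hq0, h1⟩
      refine ⟨Units.mk0 (q 1 / a₁) (div_ne_zero hq1 ha1), ?_, ?_⟩
      · rw [hq0, h0, Units.val_mk0]; ring
      · rw [Units.val_mk0]; field_simp
    · have hq0' : q 0 ≠ 0 := by
        intro hq0
        have h2 : q 1 * a₀ = 0 := by linear_combination h + a₁ * hq0
        exact hq01 ⟨hq0, (mul_eq_zero.mp h2).resolve_right h0⟩
      refine ⟨Units.mk0 (q 0 / a₀) (div_ne_zero hq0' h0), ?_, ?_⟩
      · rw [Units.val_mk0]; field_simp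
      · rw [Units.val_mk0]
        field_simp
        linear_combination h
  obtain ⟨s, t, hδ⟩ : ∃ s t : ℂ, q 2 * t - q 3 * s ≠ 0 := by
    by_cases h2 : q 2 = 0
    · exact ⟨1, 0, by
        have h3 : q 3 ≠ 0 := fun h3 => hq23 ⟨h2, h3⟩
        simpa [h2] using h3⟩
    · exact ⟨0, 1, by simpa using h2⟩
  set d : ℂ := q 1 * a₀ - q 0 * a₁ with hd_def
  set δ : ℂ := q 2 * t - q 3 * s with hδ_def
  -- the substitution L and its inverse L'
  set L : Fin 4 → P4 := ![C (q 1) * X 0 + C (-(q 0)) * X 1,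
      C (-a₁) * X 0 + C a₀ * X 1,
      C t * X 2 + C (-s) * X 3,
      C (-(q 3)) * X 2 + C (q 2) * X 3] with hLdef
  set L' : Fin 4 → P4 := ![C (a₀/d) * X 0 + C (q 0/d) * X 1,
      C (a₁/d) * X 0 + C (q 1/d) * X 1,
      C (q 2/δ) * X 2 + C (s/δ) * X 3,
      C (q 3/δ) * X 2 + C (t/δ) * X 3] with hL'def
  have hr : q 1 * a₀ - (-(q 0)) * (-a₁) ≠ 0 := by
    intro h; exact hd (by linear_combination h)
  have hs : t * q 2 - (-s) * (-(q 3)) ≠ 0 := by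
    intro h; exact hδ (by linear_combination h)
  have hr' : (a₀/d) * (q 1/d) - (q 0/d) * (a₁/d) ≠ 0 := by
    intro h
    apply hd
    field_simp at h
    linear_combination h
  have hs' : (q 2/δ) * (t/δ) - (s/δ) * (q 3/δ) ≠ 0 := by
    intro h
    apply hδ
    field_simp at h
    linear_combination h
  have hLL' : ∀ j, aeval L (L' j) = X j := by
    have hc0 : aeval L (L' 0) = X 0 := by
      rw [hL'def, hLdef]
      simp only [Matrix.cons_val_zero, Matrix.cons_val_one, Matrix.head_cons,
        Matrix.cons_val_two, Matrix.cons_val_three, Matrix.tail_cons,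
        map_add, map_mul, aeval_X, aeval_C, algebraMap_eq]
      simp only [← smul_eq_C_mul]
      match_scalars <;> field_simp <;>
        first
          | ring
          | linear_combination (-2 : ℂ) * hd_def
          | linear_combination (-2 : ℂ) * hδ_def
          | linear_combination (2 : ℂ) * hd_def
          | linear_combination (2 : ℂ) * hδ_def
          | linear_combination hd_def
          | linear_combination hδ_def
          | linear_combination -hd_def
          | linear_combination -hδ_def
    have hc1 : aeval L (L' 1) = X 1 := by
      rw [hL'def, hLdef]
      simp only [Matrix.cons_val_zero, Matrix.cons_val_one, Matrix.head_cons,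
        Matrix.cons_val_two, Matrix.cons_val_three, Matrix.tail_cons,
        map_add, map_mul, aeval_X, aeval_C, algebraMap_eq]
      simp only [← smul_eq_C_mul]
      match_scalars <;> field_simp <;>
        first
          | ring
          | linear_combination (-2 : ℂ) * hd_def
          | linear_combination (-2 : ℂ) * hδ_def
          | linear_combination (2 : ℂ) * hd_def
          | linear_combination (2 : ℂ) * hδ_def
          | linear_combination hd_def
          | linear_combination hδ_def
          | linear_combination -hd_def
          | linear_combination -hδ_def
    have hc2 : aeval L (L' 2) = X 2 := by
      rw [hL'def, hLdef]
      simp only [Matrix.cons_val_zero, Matrix.cons_val_one, Matrix.head_cons,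
        Matrix.cons_val_two, Matrix.cons_val_three, Matrix.tail_cons,
        map_add, map_mul, aeval_X, aeval_C, algebraMap_eq]
      simp only [← smul_eq_C_mul]
      match_scalars <;> field_simp <;>
        first
          | ring
          | linear_combination (-2 : ℂ) * hd_def
          | linear_combination (-2 : ℂ) * hδ_def
          | linear_combination (2 : ℂ) * hd_def
          | linear_combination (2 : ℂ) * hδ_def
          | linear_combination hd_def
          | linear_combination hδ_def
          | linear_combination -hd_def
          | linear_combination -hδ_def
    have hc3 : aeval L (L' 3) = X 3 := by
      rw [hL'def, hLdef]
      simp only [Matrix.cons_val_zero, Matrix.cons_val_one, Matrix.head_cons,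
        Matrix.cons_val_two, Matrix.cons_val_three, Matrix.tail_cons,
        map_add, map_mul, aeval_X, aeval_C, algebraMap_eq]
      simp only [← smul_eq_C_mul]
      match_scalars <;> field_simp <;>
        first
          | ring
          | linear_combination (-2 : ℂ) * hd_def
          | linear_combination (-2 : ℂ) * hδ_def
          | linear_combination (2 : ℂ) * hd_def
          | linear_combination (2 : ℂ) * hδ_def
          | linear_combination hd_def
          | linear_combination hδ_def
          | linear_combination -hd_def
          | linear_combination -hδ_def
    intro j
    fin_cases j
    exacts [hc0, hc1, hc2, hc3]
  have hL'L : ∀ j, aeval L' (L j) = X j := by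
    have hc'0 : aeval L' (L 0) = X 0 := by
      rw [hL'def, hLdef]
      simp only [Matrix.cons_val_zero, Matrix.cons_val_one, Matrix.head_cons,
        Matrix.cons_val_two, Matrix.cons_val_three, Matrix.tail_cons,
        map_add, map_mul, aeval_X, aeval_C, algebraMap_eq]
      simp only [← smul_eq_C_mul]
      match_scalars <;> field_simp <;>
        first
          | ring
          | linear_combination (-2 : ℂ) * hd_def
          | linear_combination (-2 : ℂ) * hδ_def
          | linear_combination (2 : ℂ) * hd_def
          | linear_combination (2 : ℂ) * hδ_def
          | linear_combination hd_def
          | linear_combination hδ_def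
          | linear_combination -hd_def
          | linear_combination -hδ_def
    have hc'1 : aeval L' (L 1) = X 1 := by
      rw [hL'def, hLdef]
      simp only [Matrix.cons_val_zero, Matrix.cons_val_one, Matrix.head_cons,
        Matrix.cons_val_two, Matrix.cons_val_three, Matrix.tail_cons,
        map_add, map_mul, aeval_X, aeval_C, algebraMap_eq]
      simp only [← smul_eq_C_mul]
      match_scalars <;> field_simp <;>
        first
          | ring
          | linear_combination (-2 : ℂ) * hd_def
          | linear_combination (-2 : ℂ) * hδ_def
          | linear_combination (2 : ℂ) * hd_def
          | linear_combination (2 : ℂ) * hδ_def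
          | linear_combination hd_def
          | linear_combination hδ_def
          | linear_combination -hd_def
          | linear_combination -hδ_def
    have hc'2 : aeval L' (L 2) = X 2 := by
      rw [hL'def, hLdef]
      simp only [Matrix.cons_val_zero, Matrix.cons_val_one, Matrix.head_cons,
        Matrix.cons_val_two, Matrix.cons_val_three, Matrix.tail_cons,
        map_add, map_mul, aeval_X, aeval_C, algebraMap_eq]
      simp only [← smul_eq_C_mul]
      match_scalars <;> field_simp <;>
        first
          | ring
          | linear_combination (-2 : ℂ) * hd_def
          | linear_combination (-2 : ℂ) * hδ_def
          | linear_combination (2 : ℂ) * hd_def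
          | linear_combination (2 : ℂ) * hδ_def
          | linear_combination hd_def
          | linear_combination hδ_def
          | linear_combination -hd_def
          | linear_combination -hδ_def
    have hc'3 : aeval L' (L 3) = X 3 := by
      rw [hL'def, hLdef]
      simp only [Matrix.cons_val_zero, Matrix.cons_val_one, Matrix.head_cons,
        Matrix.cons_val_two, Matrix.cons_val_three, Matrix.tail_cons,
        map_add, map_mul, aeval_X, aeval_C, algebraMap_eq]
      simp only [← smul_eq_C_mul]
      match_scalars <;> field_simp <;>
        first
          | ring
          | linear_combination (-2 : ℂ) * hd_def
          | linear_combination (-2 : ℂ) * hδ_def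
          | linear_combination (2 : ℂ) * hd_def
          | linear_combination (2 : ℂ) * hδ_def
          | linear_combination hd_def
          | linear_combination hδ_def
          | linear_combination -hd_def
          | linear_combination -hδ_def
    intro j
    fin_cases j
    exacts [hc'0, hc'1, hc'2, hc'3]
  -- homogeneity of the substitutions
  have hwxL : ∀ j, (L j).IsWeightedHomogeneous wx (wx j) := by
    intro j
    fin_cases j <;> simp only [hLdef, Matrix.cons_val_zero, Matrix.cons_val_one,
      Matrix.head_cons, Matrix.cons_val_two, Matrix.cons_val_three, Matrix.tail_cons] <;>
      exact lin_WH _ _ _ _ _ _ (by decide) (by decide)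
  have hwyL : ∀ j, (L j).IsWeightedHomogeneous wy (wy j) := by
    intro j
    fin_cases j <;> simp only [hLdef, Matrix.cons_val_zero, Matrix.cons_val_one,
      Matrix.head_cons, Matrix.cons_val_two, Matrix.cons_val_three, Matrix.tail_cons] <;>
      exact lin_WH _ _ _ _ _ _ (by decide) (by decide)
  have hwxL' : ∀ j, (L' j).IsWeightedHomogeneous wx (wx j) := by
    intro j
    fin_cases j <;> simp only [hL'def, Matrix.cons_val_zero, Matrix.cons_val_one,
      Matrix.head_cons, Matrix.cons_val_two, Matrix.cons_val_three, Matrix.tail_cons] <;>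
      exact lin_WH _ _ _ _ _ _ (by decide) (by decide)
  have hwyL' : ∀ j, (L' j).IsWeightedHomogeneous wy (wy j) := by
    intro j
    fin_cases j <;> simp only [hL'def, Matrix.cons_val_zero, Matrix.cons_val_one,
      Matrix.head_cons, Matrix.cons_val_two, Matrix.cons_val_three, Matrix.tail_cons] <;>
      exact lin_WH _ _ _ _ _ _ (by decide) (by decide)
  -- the linear equivalence
  have hcomp1 : (aeval L).toLinearMap ∘ₗ (aeval L').toLinearMap = LinearMap.id := by
    apply LinearMap.ext
    intro f
    simpa using aeval_aeval_id L L' hLL' f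
  have hcomp2 : (aeval L').toLinearMap ∘ₗ (aeval L).toLinearMap = LinearMap.id := by
    apply LinearMap.ext
    intro f
    simpa using aeval_aeval_id L' L hL'L f
  refine ⟨(Submodule.span ℂ M5).map
      (LinearEquiv.ofLinear (aeval L).toLinearMap (aeval L').toLinearMap hcomp1 hcomp2
        : P4 ≃ₗ[ℂ] P4).toLinearMap, ?_, ?_⟩
  swap
  · rw [LinearEquiv.finrank_map_eq]
    exact finrank_M5
  ext f
  simp only [Submodule.map_coe, Set.mem_image, SetLike.mem_coe, Set.mem_setOf_eq,
    LinearEquiv.coe_coe, LinearEquiv.ofLinear_apply, AlgHom.toLinearMap_apply]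
  constructor
  · rintro ⟨g, hgspan, rfl⟩
    have hgN : g ∈ Nset d d δ := by
      rw [normal_span d d δ hd hd hδ]
      exact hgspan
    obtain ⟨hgV, hgl, hgp⟩ := hgN
    rw [V33, Submodule.mem_inf] at hgV
    obtain ⟨hgx, hgy⟩ := hgV
    rw [mem_weightedHomogeneousSubmodule] at hgx hgy
    refine ⟨?_, ?_, ?_⟩
    · rw [V33, Submodule.mem_inf]
      exact ⟨aeval_isWeightedHomogeneous wx L hwxL hgx,
        aeval_isWeightedHomogeneous wy L hwyL hgy⟩
    · intro b0 b1 hb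
      rw [hLdef, singular_aeval (q 1) (-(q 0)) (-a₁) a₀ t (-s) (-(q 3)) (q 2) hr hs g
        ![a₀, a₁, b0, b1]]
      have hb' : ¬(t * b0 - s * b1 = 0 ∧ q 2 * b1 - q 3 * b0 = 0) := by
        rintro ⟨hm1, hm2⟩
        apply hb
        constructor
        · have h : δ * b0 = 0 := by
            rw [hδ_def]
            linear_combination q 2 * hm1 + s * hm2
          exact (mul_eq_zero.mp h).resolve_left hδ
        · have h : δ * b1 = 0 := by
            rw [hδ_def]
            linear_combination q 3 * hm1 + t * hm2
          exact (mul_eq_zero.mp h).resolve_left hδ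
      exact SingularAt.of_eq (hgl (t * b0 - s * b1) (q 2 * b1 - q 3 * b0) hb')
        (by intro i; fin_cases i <;> simp [hd_def, hδ_def] <;> ring)
    · rw [hLdef, singular_aeval (q 1) (-(q 0)) (-a₁) a₀ t (-s) (-(q 3)) (q 2) hr hs g q]
      exact SingularAt.of_eq hgp
        (by intro i; fin_cases i <;> simp [hd_def, hδ_def] <;> ring)
  · rintro ⟨hfV, hfl, hfp⟩
    rw [V33, Submodule.mem_inf] at hfV
    obtain ⟨hfx, hfy⟩ := hfV
    rw [mem_weightedHomogeneousSubmodule] at hfx hfy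
    refine ⟨aeval L' f, ?_, aeval_aeval_id L L' hLL' f⟩
    have hmem : aeval L' f ∈ Nset d d δ := by
      refine ⟨?_, ?_, ?_⟩
      · rw [V33, Submodule.mem_inf]
        exact ⟨aeval_isWeightedHomogeneous wx L' hwxL' hfx,
          aeval_isWeightedHomogeneous wy L' hwyL' hfy⟩
      · intro b0 b1 hb
        rw [hL'def, singular_aeval (a₀/d) (q 0/d) (a₁/d) (q 1/d) (q 2/δ) (s/δ) (q 3/δ) (t/δ)
          hr' hs' f ![d, 0, b0, b1]]
        have hb'' : ¬((q 2 * b0 + s * b1)/δ = 0 ∧ (q 3 * b0 + t * b1)/δ = 0) := by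
          rintro ⟨h1', h2'⟩
          have hm1 : q 2 * b0 + s * b1 = 0 := (div_eq_zero_iff.mp h1').resolve_right hδ
          have hm2 : q 3 * b0 + t * b1 = 0 := (div_eq_zero_iff.mp h2').resolve_right hδ
          apply hb
          constructor
          · have h : δ * b0 = 0 := by
              rw [hδ_def]
              linear_combination t * hm1 - s * hm2
            exact (mul_eq_zero.mp h).resolve_left hδ
          · have h : δ * b1 = 0 := by
              rw [hδ_def]
              linear_combination (-(q 3)) * hm1 + q 2 * hm2
            exact (mul_eq_zero.mp h).resolve_left hδ
        exact SingularAt.of_eq (hfl ((q 2 * b0 + s * b1)/δ) ((q 3 * b0 + t * b1)/δ) hb'')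
          (by intro i; fin_cases i <;> simp <;> field_simp <;> ring)
      · rw [hL'def, singular_aeval (a₀/d) (q 0/d) (a₁/d) (q 1/d) (q 2/δ) (s/δ) (q 3/δ) (t/δ)
          hr' hs' f ![0, d, δ, 0]]
        exact SingularAt.of_eq hfp
          (by intro i; fin_cases i <;> simp <;> field_simp)
    rw [normal_span d d δ hd hd hδ] at hmem
    exact hmem

end
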